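/- Let Ω = ℕ^{d+1}, V = S × ℕ^{d+1}, E = S' × ℕ^{d+1}, and define the deformed grafting σ ∿̂ᵃ τ := Σ_{v∈N_τ} Σ_{ℓ∈ℕ^{d+1}} C(n_v, ℓ) · σ ∿_v^{a−ℓ} (↑_v^{−ℓ} τ), where terms with a−ℓ or n_v−ℓ undefined vanish. Then the grading |τ| := Σ_{e ∈ E_τ} |e(e)|_s (sum of scaled edge decorations) satisfies: σ ∿̂ᵃ τ = σ ∿ᵃ τ + (terms of strictly lower grading), i.e., the ℓ = 0 term is the undeformed grafting and every term with ℓ ≠ 0 has strictly smaller grading. -/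

import Mathlib

/-- Planar rooted trees with vertex decorations in `V` and edge decorations in `E`. -/
inductive RT (V E : Type) : Type where
  | node : V → List (E × RT V E) → RT V E

/-- One-step reordering of children (at the root or at a deeper vertex). -/
inductive Swap {V E : Type} : RT V E → RT V E → Prop where
  | here (v : V) (l₁ l₂ : List (E × RT V E)) (p q : E × RT V E) :
      Swap (.node v (l₁ ++ p :: q :: l₂)) (.node v (l₁ ++ q :: p :: l₂))
  | child (v : V) (l₁ l₂ : List (E × RT V E)) (e : E) {t t' : RT V E} :
      Swap t t' → Swap (.node v (l₁ ++ (e, t) :: l₂)) (.node v (l₁ ++ (e, t') :: l₂))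

/-- (Non-planar) decorated rooted trees: planar trees modulo reordering of children. -/
def QT (V E : Type) : Type := Quot (@Swap V E)

/-- The linear span of decorated rooted trees, with rational coefficients. -/
abbrev Span (V E : Type) : Type := QT V E →₀ ℚ

def qt {V E : Type} (t : RT V E) : QT V E := Quot.mk _ t

/-- A tree, as a basis vector of the span. -/
noncomputable def bas {V E : Type} (t : RT V E) : Span V E := Finsupp.single (qt t) 1

/-- The element of the span given by a list of trees (sum with multiplicity). -/
noncomputable def ofList {V E : Type} (l : List (RT V E)) : Span V E := (l.map bas).sum

/-- Formal rational combination of planar trees, as an element of the span. -/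
noncomputable def combo {V E : Type} (l : List (ℚ × RT V E)) : Span V E :=
  (l.map fun p => p.1 • bas p.2).sum

mutual
/-- List of the graftings of `σ` on each vertex of a tree, via a new `a`-edge. -/
def graftT {V E : Type} (a : E) (σ : RT V E) : RT V E → List (RT V E)
  | .node v l => .node v ((a, σ) :: l) :: (graftL a σ l).map (.node v)
/-- Auxiliary: graftings of `σ` inside one of the listed subtrees. -/
def graftL {V E : Type} (a : E) (σ : RT V E) :
    List (E × RT V E) → List (List (E × RT V E))
  | [] => []
  | (e, t) :: r =>
      ((graftT a σ t).map fun t' => (e, t') :: r)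
        ++ ((graftL a σ r).map fun r' => (e, t) :: r')
end

/-- Multi-indices in `ℕ^{d+1}`. -/
abbrev Nd (d : ℕ) : Type := Fin (d + 1) → ℕ

/-- Componentwise binomial coefficient on `ℕ^{d+1}` (zero if some component exceeds). -/
def binom {d : ℕ} (n ℓ : Nd d) : ℕ := ∏ c, Nat.choose (n c) (ℓ c)

/-- The scaled degree `|n|_s = Σ_c s_c · n_c` of a multi-index. -/
def sdeg {d : ℕ} (s : Nd d) (n : Nd d) : ℕ := ∑ c, s c * n c

mutual
/-- The grading of a decorated tree: the sum of the scaled degrees of its edge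
decorations. -/
def gradT {S S' d : ℕ} (s : Nd d) : RT (Fin S × Nd d) (Fin S' × Nd d) → ℕ
  | .node _ l => gradL s l
def gradL {S S' d : ℕ} (s : Nd d) : List ((Fin S' × Nd d) × RT (Fin S × Nd d) (Fin S' × Nd d)) → ℕ
  | [] => 0
  | (e, t) :: r => sdeg s e.2 + gradT s t + gradL s r
end

mutual
/-- The deformed grafting `σ ∿̂ᵃ τ := Σ_{v∈N_τ} Σ_{ℓ} C(n_v, ℓ) σ ∿_v^{a−ℓ} (↑_v^{−ℓ} τ)`
of [BCCH], as a formal rational combination of planar representatives.  At a vertex with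
decoration `(s₀, n)` and for `ℓ ≤ n ⊓ a₂` the grafted edge is decorated `(a₁, a₂ − ℓ)`
and the vertex decoration becomes `(s₀, n − ℓ)`; terms with `ℓ ≰ n` or `ℓ ≰ a₂`
vanish. -/
noncomputable def dgraftT {S S' d : ℕ} (a : Fin S' × Nd d)
    (σ : RT (Fin S × Nd d) (Fin S' × Nd d)) :
    RT (Fin S × Nd d) (Fin S' × Nd d) → List (ℚ × RT (Fin S × Nd d) (Fin S' × Nd d))
  | .node v l =>
      ((Finset.Iic (v.2 ⊓ a.2)).toList.map fun ℓ =>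
        ((binom v.2 ℓ : ℚ), RT.node (v.1, v.2 - ℓ) (((a.1, a.2 - ℓ), σ) :: l)))
      ++ (dgraftL a σ l).map fun p => (p.1, RT.node v p.2)
/-- Auxiliary: deformed graftings inside one of the listed subtrees. -/
noncomputable def dgraftL {S S' d : ℕ} (a : Fin S' × Nd d)
    (σ : RT (Fin S × Nd d) (Fin S' × Nd d)) :
    List ((Fin S' × Nd d) × RT (Fin S × Nd d) (Fin S' × Nd d)) →
      List (ℚ × List ((Fin S' × Nd d) × RT (Fin S × Nd d) (Fin S' × Nd d)))
  | [] => []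
  | (e, t) :: r =>
      ((dgraftT a σ t).map fun p => (p.1, (e, p.2) :: r))
        ++ ((dgraftL a σ r).map fun p => (p.1, (e, t) :: p.2))
end


section AuxLemmas

variable {V E : Type}

lemma combo_cons (p : ℚ × RT V E) (L : List (ℚ × RT V E)) :
    combo (p :: L) = p.1 • bas p.2 + combo L := by
  simp [combo]

lemma combo_append (A B : List (ℚ × RT V E)) :
    combo (A ++ B) = combo A + combo B := by
  simp [combo]

lemma ofList_cons (t : RT V E) (L : List (RT V E)) :
    ofList (t :: L) = bas t + ofList L := by
  simp [ofList]

lemma ofList_append (A B : List (RT V E)) :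
    ofList (A ++ B) = ofList A + ofList B := by
  simp [ofList]

lemma combo_perm {A B : List (ℚ × RT V E)} (h : A.Perm B) : combo A = combo B :=
  (h.map _).sum_eq

lemma support_combo_lt (G : QT V E → ℕ) (K : ℕ) (L : List (ℚ × RT V E))
    (h : ∀ p ∈ L, G (qt p.2) < K) : ∀ q ∈ (combo L).support, G q < K := by
  classical
  induction L with
  | nil => simp [combo]
  | cons p L ih =>
    intro q hq
    rw [combo_cons] at hq
    rcases Finset.mem_union.mp (Finsupp.support_add hq) with hq | hq
    · have hq' := Finsupp.support_smul hq
      have := Finsupp.support_single_subset hq'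
      simp only [Finset.mem_singleton] at this
      subst this
      exact h p List.mem_cons_self
    · exact ih (fun p hp => h p (List.mem_cons_of_mem _ hp)) q hq

lemma mapDomain_combo (f : RT V E → RT V E)
    (hf : ∀ a b, Swap a b → Swap (f a) (f b)) (L : List (ℚ × RT V E)) :
    Finsupp.mapDomain (Quot.lift (fun t => qt (f t)) fun a b h => Quot.sound (hf a b h))
        (combo L) = combo (L.map fun p => (p.1, f p.2)) := by
  induction L with
  | nil => simp [combo]; exact Finsupp.mapDomain_zero
  | cons p L ih =>
    simp only [List.map_cons, combo_cons, Finsupp.mapDomain_add, Finsupp.mapDomain_smul, ← ih]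
    refine Finsupp.mapDomain_add.trans ?_
    congr 1
    refine (Finsupp.mapDomain_smul _ _).trans ?_
    congr 1
    exact Finsupp.mapDomain_single

lemma mapDomain_ofList (f : RT V E → RT V E)
    (hf : ∀ a b, Swap a b → Swap (f a) (f b)) (L : List (RT V E)) :
    Finsupp.mapDomain (Quot.lift (fun t => qt (f t)) fun a b h => Quot.sound (hf a b h))
        (ofList L) = ofList (L.map f) := by
  induction L with
  | nil => simp [ofList]; exact Finsupp.mapDomain_zero
  | cons t L ih =>
    simp only [List.map_cons, ofList_cons, Finsupp.mapDomain_add, ← ih]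
    refine Finsupp.mapDomain_add.trans ?_
    congr 1
    exact Finsupp.mapDomain_single

lemma transfer (G : QT V E → ℕ) (gr : RT V E → ℕ) (hG : ∀ t, G (qt t) = gr t)
    (f : RT V E → RT V E) (hf : ∀ a b, Swap a b → Swap (f a) (f b))
    (c : ℕ) (hc : ∀ u, gr (f u) = c + gr u)
    (A : List (ℚ × RT V E)) (B : List (RT V E)) (K : ℕ)
    (h : ∀ q ∈ (combo A - ofList B).support, G q < K) :
    ∀ q ∈ (combo (A.map fun p => (p.1, f p.2)) - ofList (B.map f)).support, G q < c + K := by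
  classical
  intro q hq
  set W : QT V E → QT V E :=
    Quot.lift (fun t => qt (f t)) (fun a b h => Quot.sound (hf a b h)) with hW
  have hmap : combo (A.map fun p => (p.1, f p.2)) - ofList (B.map f)
      = Finsupp.mapDomain W (combo A - ofList B) := by
    rw [← mapDomain_combo f hf A, ← mapDomain_ofList f hf B]
    have := (Finsupp.mapDomain.addMonoidHom (M := ℚ) W).map_sub (combo A) (ofList B)
    simp only [Finsupp.mapDomain.addMonoidHom_apply] at this
    exact this.symm
  rw [hmap] at hq
  obtain ⟨q', hq', rfl⟩ := Finset.mem_image.mp (Finsupp.mapDomain_support hq)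
  obtain ⟨t, rfl⟩ := Quot.exists_rep q'
  have h1 : W (Quot.mk _ t) = qt (f t) := rfl
  rw [h1, hG, hc]
  have : G (Quot.mk _ t) < K := h _ hq'
  rw [show (Quot.mk Swap t : QT V E) = qt t from rfl, hG] at this
  omega

end AuxLemmas

lemma binom_zero {d : ℕ} (n : Nd d) : binom n 0 = 1 := by
  simp [binom]

lemma sdeg_sub_lt {d : ℕ} {s n ℓ : Nd d} (hs : ∀ c, 0 < s c) (hn : ℓ ≤ n) (h0 : ℓ ≠ 0) :
    sdeg s (n - ℓ) < sdeg s n := by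
  obtain ⟨c₀, hc₀⟩ : ∃ c, 0 < ℓ c := by
    by_contra h
    push_neg at h
    exact h0 (funext fun c => Nat.le_zero.mp (h c))
  unfold sdeg
  refine Finset.sum_lt_sum (fun c _ => Nat.mul_le_mul_left _ ?_) ⟨c₀, Finset.mem_univ _, ?_⟩
  · exact Nat.sub_le _ _
  · have h1 : ℓ c₀ ≤ n c₀ := hn c₀
    have h2 : (n - ℓ) c₀ = n c₀ - ℓ c₀ := rfl
    have h3 : 0 < n c₀ := lt_of_lt_of_le hc₀ h1
    have : n c₀ - ℓ c₀ < n c₀ := Nat.sub_lt h3 hc₀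
    rw [h2]
    exact Nat.mul_lt_mul_of_pos_left this (hs c₀)

mutual

theorem keyT {S S' d : ℕ} (s : Nd d) (hs : ∀ c, 0 < s c)
    (G : QT (Fin S × Nd d) (Fin S' × Nd d) → ℕ)
    (hG : ∀ t, G (qt t) = gradT s t)
    (a : Fin S' × Nd d) (σ : RT (Fin S × Nd d) (Fin S' × Nd d)) :
    ∀ (τ : RT (Fin S × Nd d) (Fin S' × Nd d)),
      ∀ q ∈ (combo (dgraftT a σ τ) - ofList (graftT a σ τ)).support,
        G q < gradT s σ + gradT s τ + sdeg s a.2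
  | .node v l => by
    classical
    intro q hq
    have hK : gradT s (RT.node v l) = gradL s l := rfl
    rw [dgraftT, graftT, combo_append, ofList_cons] at hq
    -- the ℓ = 0 head term is the grafting at the root
    set F := Finset.Iic (v.2 ⊓ a.2) with hF
    have h0F : (0 : Nd d) ∈ F.toList := by
      simp [hF, Finset.mem_toList, Finset.mem_Iic]
    have hperm := (List.perm_cons_erase h0F).map
      (fun ℓ : Nd d => ((binom v.2 ℓ : ℚ), RT.node (v.1, v.2 - ℓ) (((a.1, a.2 - ℓ), σ) :: l)))
    rw [combo_perm hperm, List.map_cons, combo_cons] at hq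
    have h00 : ((binom v.2 (0 : Nd d) : ℚ),
          RT.node (v.1, v.2 - 0) (((a.1, a.2 - 0), σ) :: l)).1 •
          bas ((((binom v.2 (0 : Nd d) : ℚ)),
          RT.node (v.1, v.2 - 0) (((a.1, a.2 - 0), σ) :: l)).2)
        = bas (RT.node v ((a, σ) :: l)) := by
      simp [binom_zero]
    rw [h00] at hq
    have hq' : q ∈ (combo ((F.toList.erase 0).map
          (fun ℓ : Nd d => ((binom v.2 ℓ : ℚ), RT.node (v.1, v.2 - ℓ) (((a.1, a.2 - ℓ), σ) :: l))))
        + (combo ((dgraftL a σ l).map fun p => (p.1, RT.node v p.2))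
          - ofList ((graftL a σ l).map (RT.node v)))).support := by
      convert hq using 2
      abel
    rcases Finset.mem_union.mp (Finsupp.support_add hq') with hq'' | hq''
    · -- lower-order head terms
      refine support_combo_lt G _ _ ?_ q hq''
      intro p hp
      obtain ⟨ℓ, hℓ, rfl⟩ := List.mem_map.mp hp
      have hℓ0 : ℓ ≠ 0 := (F.nodup_toList.mem_erase_iff.mp hℓ).1
      have hℓF : ℓ ∈ F := Finset.mem_toList.mp (List.mem_of_mem_erase hℓ)
      have hℓa : ℓ ≤ a.2 := le_trans (Finset.mem_Iic.mp hℓF) inf_le_right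
      have hgr : gradT s (RT.node (v.1, v.2 - ℓ) (((a.1, a.2 - ℓ), σ) :: l))
          = sdeg s (a.2 - ℓ) + gradT s σ + gradL s l := rfl
      rw [hG, hgr, hK]
      have := sdeg_sub_lt hs hℓa hℓ0
      omega
    · -- recurse into the subtrees
      rw [hK]
      exact keyL s hs G hG a σ l v q hq''

theorem keyL {S S' d : ℕ} (s : Nd d) (hs : ∀ c, 0 < s c)
    (G : QT (Fin S × Nd d) (Fin S' × Nd d) → ℕ)
    (hG : ∀ t, G (qt t) = gradT s t)
    (a : Fin S' × Nd d) (σ : RT (Fin S × Nd d) (Fin S' × Nd d)) :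
    ∀ (l : List ((Fin S' × Nd d) × RT (Fin S × Nd d) (Fin S' × Nd d)))
      (v : Fin S × Nd d),
      ∀ q ∈ (combo ((dgraftL a σ l).map fun p => (p.1, RT.node v p.2))
          - ofList ((graftL a σ l).map (RT.node v))).support,
        G q < gradT s σ + gradL s l + sdeg s a.2
  | [], v => by
    intro q hq
    simp [dgraftL, graftL, combo, ofList] at hq
  | (e, t) :: r, v => by
    classical
    intro q hq
    rw [dgraftL, graftL, List.map_append, List.map_append, List.map_map, List.map_map,
      List.map_map, List.map_map, combo_append] at hq
    rw [ofList_append] at hq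
    have hq' : q ∈ ((combo ((dgraftT a σ t).map
            ((fun p => (p.1, RT.node v p.2)) ∘ fun p => (p.1, (e, p.2) :: r)))
          - ofList ((graftT a σ t).map ((RT.node v) ∘ fun t' => (e, t') :: r)))
        + (combo ((dgraftL a σ r).map
            ((fun p => (p.1, RT.node v p.2)) ∘ fun p => (p.1, (e, t) :: p.2)))
          - ofList ((graftL a σ r).map ((RT.node v) ∘ fun r' => (e, t) :: r')))).support := by
      convert hq using 2
      abel
    have hKg : gradL s ((e, t) :: r) = sdeg s e.2 + gradT s t + gradL s r := rfl
    rcases Finset.mem_union.mp (Finsupp.support_add hq') with hq'' | hq''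
    · -- grafting inside the first subtree
      set f : RT (Fin S × Nd d) (Fin S' × Nd d) → RT (Fin S × Nd d) (Fin S' × Nd d) :=
        fun u => RT.node v ((e, u) :: r) with hf
      have hfs : ∀ u u', Swap u u' → Swap (f u) (f u') :=
        fun u u' h => Swap.child v [] r e h
      have hfc : ∀ u, gradT s (f u) = (sdeg s e.2 + gradL s r) + gradT s u := by
        intro u
        have : gradT s (f u) = sdeg s e.2 + gradT s u + gradL s r := rfl
        omega
      have hlist1 : ((dgraftT a σ t).map
            ((fun p => (p.1, RT.node v p.2)) ∘ fun p => (p.1, (e, p.2) :: r)))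
          = (dgraftT a σ t).map fun p => (p.1, f p.2) := rfl
      have hlist2 : ((graftT a σ t).map ((RT.node v) ∘ fun t' => (e, t') :: r))
          = (graftT a σ t).map f := rfl
      rw [hlist1, hlist2] at hq''
      have := transfer G (gradT s) hG f hfs (sdeg s e.2 + gradL s r) hfc
        (dgraftT a σ t) (graftT a σ t) (gradT s σ + gradT s t + sdeg s a.2)
        (keyT s hs G hG a σ t) q hq''
      rw [hKg]
      omega
    · -- grafting inside the remaining subtrees
      set f : RT (Fin S × Nd d) (Fin S' × Nd d) → RT (Fin S × Nd d) (Fin S' × Nd d) :=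
        fun u => match u with | .node w m => RT.node w ((e, t) :: m) with hf
      have hfs : ∀ u u', Swap u u' → Swap (f u) (f u') := by
        intro u u' h
        cases h with
        | here w l₁ l₂ p q => exact Swap.here w ((e, t) :: l₁) l₂ p q
        | child w l₁ l₂ e' h' => exact Swap.child w ((e, t) :: l₁) l₂ e' h'
      have hfc : ∀ u, gradT s (f u) = (sdeg s e.2 + gradT s t) + gradT s u := by
        intro u
        cases u with
        | node w m =>
          have : gradT s (f (RT.node w m)) = sdeg s e.2 + gradT s t + gradL s m := rfl
          have h2 : gradT s (RT.node w m) = gradL s m := rfl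
          omega
      have hlist1 : ((dgraftL a σ r).map
            ((fun p => (p.1, RT.node v p.2)) ∘ fun p => (p.1, (e, t) :: p.2)))
          = ((dgraftL a σ r).map fun p => (p.1, RT.node v p.2)).map
              fun p => (p.1, f p.2) := by
        simp [List.map_map]
        intro _ _ _
        rfl
      have hlist2 : ((graftL a σ r).map ((RT.node v) ∘ fun r' => (e, t) :: r'))
          = ((graftL a σ r).map (RT.node v)).map f := by
        simp [List.map_map]
        intro _ _
        rfl
      rw [hlist1, hlist2] at hq''
      have := transfer G (gradT s) hG f hfs (sdeg s e.2 + gradT s t) hfc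
        ((dgraftL a σ r).map fun p => (p.1, RT.node v p.2))
        ((graftL a σ r).map (RT.node v)) (gradT s σ + gradL s r + sdeg s a.2)
        (keyL s hs G hG a σ r v) q hq''
      rw [hKg]
      omega

end

/-- **The deformed grafting is a lower-order deformation of grafting.**  With vertex
decorations in `V = S × ℕ^{d+1}`, edge decorations in `E = S' × ℕ^{d+1}` and a scaling
`s` with all `s_c > 0`, one has `σ ∿̂ᵃ τ = σ ∿ᵃ τ + (terms of strictly lower grading)`:
the `ℓ = 0` part of `σ ∿̂ᵃ τ` is exactly the undeformed grafting `σ ∿ᵃ τ`, and every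
tree occurring in the difference `σ ∿̂ᵃ τ − σ ∿ᵃ τ` has grading strictly smaller than
the grading `|σ| + |τ| + |a₂|_s` of the leading terms.  Here `G` is the grading induced
on non-planar trees. -/
theorem dgraft_deformation {S S' d : ℕ} (s : Nd d) (hs : ∀ c, 0 < s c)
    (G : QT (Fin S × Nd d) (Fin S' × Nd d) → ℕ)
    (hG : ∀ t, G (qt t) = gradT s t)
    (a : Fin S' × Nd d) (σ τ : RT (Fin S × Nd d) (Fin S' × Nd d)) :
    ∀ q ∈ (combo (dgraftT a σ τ) - ofList (graftT a σ τ)).support,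
      G q < gradT s σ + gradT s τ + sdeg s a.2 :=
  keyT s hs G hG a σ τ
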